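/- Let D be a Steiner system S(2,3,v) and let B, C be distinct blocks. If I(B,C) ≠ I(B^{(i, i+1)}, C^{(i, i+1)}) for some i, where I(B,C) = |N⁻(B) ∩ N⁻(C)| in Welter's game Γ_{v,3} and the superscript denotes applying the transposition swapping i and i+1, then {B, C} = {{i, x, y}, {i+1, x, z}} for some x, y, z ∈ [v] with y ≠ z. -/

import Mathlib

/-- The edge relation of Welter's game: there is an edge from `P` to `P^{(p q)}`
whenever `p ∈ P`, `q ∉ P`, `q < p`. -/
def welterEdge (P Q : Finset ℕ) : Prop :=
  ∃ p ∈ P, ∃ q, q ∉ P ∧ q < p ∧ Q = insert q (P.erase p)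

/-- The vertex set of Welter's game `Γ_{v,k}`: the `k`-element subsets of `{0, ..., v-1}`. -/
def welterVertex (v k : ℕ) : Set (Finset ℕ) :=
  {P | P ⊆ Finset.range v ∧ P.card = k}

/-- The edge relation of Welter's game `Γ_{v,k}`. -/
def welterRel (v k : ℕ) : Finset ℕ → Finset ℕ → Prop :=
  fun P Q => P ∈ welterVertex v k ∧ Q ∈ welterVertex v k ∧ welterEdge P Q

/-- A `t`-`(v, k, lam)` design with point set `{0, ..., v-1}` and block set `𝔅`:
every block is a `k`-subset of `{0, ..., v-1}` and every `t`-subset of `{0, ..., v-1}`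
is contained in exactly `lam` blocks. -/
def IsDesign (v t k lam : ℕ) (𝔅 : Finset (Finset ℕ)) : Prop :=
  (∀ b ∈ 𝔅, b ⊆ Finset.range v ∧ b.card = k) ∧
  ∀ T : Finset ℕ, T ⊆ Finset.range v → T.card = t →
    (𝔅.filter fun b => T ⊆ b).card = lam

/-- A Steiner system `S(t, k, v)` with point set `{0, ..., v-1}`. -/
def IsSteiner (v t k : ℕ) (𝔅 : Finset (Finset ℕ)) : Prop :=
  IsDesign v t k 1 𝔅

/-- `I(B, C) = |N⁻(B) ∩ N⁻(C)|` in Welter's game `Γ_{v,3}`. -/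
noncomputable def ICount (v : ℕ) (B C : Finset ℕ) : ℕ :=
  Set.ncard {P | welterRel v 3 P B ∧ welterRel v 3 P C}

open Finset

/-- The conclusion shape of the main theorem. -/
def WGood (B C : Finset ℕ) (i : ℕ) : Prop :=
  ∃ x y z : ℕ, y ≠ z ∧
      ((B = {i, x, y} ∧ C = {i + 1, x, z}) ∨ (B = {i + 1, x, z} ∧ C = {i, x, y}))

lemma welterEdge_iff (P B : Finset ℕ) :
    welterEdge P B ↔ ∃ p q, P \ B = {p} ∧ B \ P = {q} ∧ q < p := by
  constructor
  · rintro ⟨p, hp, q, hq, hlt, rfl⟩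
    refine ⟨p, q, ?_, ?_, hlt⟩
    · ext x
      simp only [mem_sdiff, mem_insert, mem_erase, mem_singleton]
      constructor
      · rintro ⟨hxP, hx⟩
        by_contra hxp
        exact hx (Or.inr ⟨hxp, hxP⟩)
      · rintro rfl
        refine ⟨hp, ?_⟩
        rintro (rfl | ⟨hne, -⟩)
        exacts [hq hp, hne rfl]
    · ext x
      simp only [mem_sdiff, mem_insert, mem_erase, mem_singleton]
      constructor
      · rintro ⟨rfl | ⟨-, hxP⟩, hx⟩
        · rfl
        · exact absurd hxP hx
      · rintro rfl
        exact ⟨Or.inl rfl, hq⟩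
  · rintro ⟨p, q, h1, h2, hlt⟩
    have hp : p ∈ P ∧ p ∉ B := mem_sdiff.mp (h1 ▸ mem_singleton_self p)
    have hq : q ∈ B ∧ q ∉ P := mem_sdiff.mp (h2 ▸ mem_singleton_self q)
    refine ⟨p, hp.1, q, hq.2, hlt, ?_⟩
    ext x
    simp only [mem_insert, mem_erase]
    constructor
    · intro hxB
      by_cases hxP : x ∈ P
      · right
        refine ⟨?_, hxP⟩
        rintro rfl
        exact hp.2 hxB
      · left
        have hm : x ∈ B \ P := mem_sdiff.mpr ⟨hxB, hxP⟩
        rw [h2] at hm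
        exact mem_singleton.mp hm
    · rintro (rfl | ⟨hxp, hxP⟩)
      · exact hq.1
      · by_contra hxB
        have hm : x ∈ P \ B := mem_sdiff.mpr ⟨hxP, hxB⟩
        rw [h1] at hm
        exact hxp (mem_singleton.mp hm)

/-- Key structural lemma: if `P` is a common in-neighbour of `B` and `C`
(with `|B ∩ C| ≤ 1`) and the pair replaced along the edge `P → B` is exactly
`(i, i+1)`, then `B, C` have the special form. -/
lemma welter_key (B C P : Finset ℕ) (hB3 : B.card = 3) (hC3 : C.card = 3) (hP3 : P.card = 3)
    (hBC : (B ∩ C).card ≤ 1) (i p' q' : ℕ)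
    (h1 : P \ B = {i + 1}) (h2 : B \ P = {i})
    (h3 : P \ C = {p'}) (h4 : C \ P = {q'}) :
    ∃ x y z, y ≠ z ∧ B = {i, x, y} ∧ C = {i + 1, x, z} := by
  have hpP : i + 1 ∈ P := (mem_sdiff.mp (h1 ▸ mem_singleton_self (i + 1))).1
  have hpB : i + 1 ∉ B := (mem_sdiff.mp (h1 ▸ mem_singleton_self (i + 1))).2
  have hqB : i ∈ B := (mem_sdiff.mp (h2 ▸ mem_singleton_self i)).1
  have hqP : i ∉ P := (mem_sdiff.mp (h2 ▸ mem_singleton_self i)).2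
  have hp'P : p' ∈ P := (mem_sdiff.mp (h3 ▸ mem_singleton_self p')).1
  have hp'C : p' ∉ C := (mem_sdiff.mp (h3 ▸ mem_singleton_self p')).2
  -- i+1 ∈ C
  have hpC : i + 1 ∈ C := by
    by_contra hpc
    have hpp' : i + 1 = p' := by
      have hm : i + 1 ∈ P \ C := mem_sdiff.mpr ⟨hpP, hpc⟩
      rw [h3] at hm
      exact mem_singleton.mp hm
    have hsub : P.erase (i + 1) ⊆ B ∩ C := by
      intro x hx
      have hxP := mem_of_mem_erase hx
      have hxne := ne_of_mem_erase hx
      have hxB : x ∈ B := by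
        by_contra hxb
        have hm : x ∈ P \ B := mem_sdiff.mpr ⟨hxP, hxb⟩
        rw [h1] at hm
        exact hxne (mem_singleton.mp hm)
      have hxC : x ∈ C := by
        by_contra hxc
        apply hxne
        have hm : x ∈ P \ C := mem_sdiff.mpr ⟨hxP, hxc⟩
        rw [h3] at hm
        rw [hpp']
        exact mem_singleton.mp hm
      exact mem_inter.mpr ⟨hxB, hxC⟩
    have hc := card_le_card hsub
    rw [card_erase_of_mem hpP, hP3] at hc
    omega
  have hpp' : i + 1 ≠ p' := fun hh => hp'C (hh ▸ hpC)
  -- i ∉ C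
  have hiC : i ∉ C := by
    intro hiC
    have hcard : (P ∩ C).card = 2 := by
      have he : P ∩ C = P \ (P \ C) := (sdiff_sdiff_self_left P C).symm
      rw [he, card_sdiff_of_subset sdiff_subset, h3, hP3, card_singleton]
    obtain ⟨c, hcPC, hcp⟩ := exists_mem_ne (s := P ∩ C) (by omega) (i + 1)
    have hcP := (mem_inter.mp hcPC).1
    have hcC := (mem_inter.mp hcPC).2
    have hcB : c ∈ B := by
      by_contra hcb
      have hm : c ∈ P \ B := mem_sdiff.mpr ⟨hcP, hcb⟩
      rw [h1] at hm
      exact hcp (mem_singleton.mp hm)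
    have hci : i ≠ c := fun hh => hqP (hh ▸ hcP)
    have hsub : ({i, c} : Finset ℕ) ⊆ B ∩ C := by
      intro x hx
      rcases mem_insert.mp hx with rfl | hx
      · exact mem_inter.mpr ⟨hqB, hiC⟩
      · rw [mem_singleton.mp hx]
        exact mem_inter.mpr ⟨hcB, hcC⟩
    have hc := card_le_card hsub
    rw [card_pair hci] at hc
    omega
  -- the common point x
  have hsubP : ({i + 1, p'} : Finset ℕ) ⊆ P := by
    intro x hx
    rcases mem_insert.mp hx with rfl | hx
    · exact hpP
    · rw [mem_singleton.mp hx]; exact hp'P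
  have hxcard : (P \ {i + 1, p'}).card = 1 := by
    rw [card_sdiff_of_subset hsubP, card_pair hpp', hP3]
  obtain ⟨x, hx⟩ := card_pos.mp (by omega : 0 < (P \ {i + 1, p'}).card)
  have hxP := (mem_sdiff.mp hx).1
  have hxne := (mem_sdiff.mp hx).2
  simp only [mem_insert, mem_singleton, not_or] at hxne
  have hxB : x ∈ B := by
    by_contra hxb
    have hm : x ∈ P \ B := mem_sdiff.mpr ⟨hxP, hxb⟩
    rw [h1] at hm
    exact hxne.1 (mem_singleton.mp hm)
  have hxC : x ∈ C := by
    by_contra hxc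
    have hm : x ∈ P \ C := mem_sdiff.mpr ⟨hxP, hxc⟩
    rw [h3] at hm
    exact hxne.2 (mem_singleton.mp hm)
  have hBCx : B ∩ C = {x} := by
    refine (eq_of_subset_of_card_le ?_ ?_).symm
    · exact singleton_subset_iff.mpr (mem_inter.mpr ⟨hxB, hxC⟩)
    · rw [card_singleton]; exact hBC
  -- build B = {i, x, y}
  have hix : i ≠ x := fun hh => hiC (hh ▸ hxC)
  have hsubB : ({i, x} : Finset ℕ) ⊆ B := by
    intro a ha
    rcases mem_insert.mp ha with rfl | ha
    · exact hqB
    · rw [mem_singleton.mp ha]; exact hxB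
  obtain ⟨y, hy⟩ := card_eq_one.mp
    (by rw [card_sdiff_of_subset hsubB, card_pair hix, hB3] : (B \ {i, x}).card = 1)
  have hBeq : B = {i, x, y} := by
    have h' := union_sdiff_of_subset hsubB
    rw [hy] at h'
    rw [← h']
    ext a
    simp only [mem_union, mem_insert, mem_singleton]
    tauto
  -- build C = {i+1, x, z}
  have hp1x : i + 1 ≠ x := fun hh => hpB (hh ▸ hxB)
  have hsubC : ({i + 1, x} : Finset ℕ) ⊆ C := by
    intro a ha
    rcases mem_insert.mp ha with rfl | ha
    · exact hpC
    · rw [mem_singleton.mp ha]; exact hxC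
  obtain ⟨z, hz⟩ := card_eq_one.mp
    (by rw [card_sdiff_of_subset hsubC, card_pair hp1x, hC3] : (C \ {i + 1, x}).card = 1)
  have hCeq : C = {i + 1, x, z} := by
    have h' := union_sdiff_of_subset hsubC
    rw [hz] at h'
    rw [← h']
    ext a
    simp only [mem_union, mem_insert, mem_singleton]
    tauto
  -- y ≠ z
  have hy' : y ∈ B \ ({i, x} : Finset ℕ) := hy ▸ mem_singleton_self y
  have hz' : z ∈ C \ ({i + 1, x} : Finset ℕ) := hz ▸ mem_singleton_self z
  have hyB := (mem_sdiff.mp hy').1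
  have hyix := (mem_sdiff.mp hy').2
  simp only [mem_insert, mem_singleton, not_or] at hyix
  have hzC := (mem_sdiff.mp hz').1
  have hyC : y ∉ C := by
    intro hyC
    have : y ∈ B ∩ C := mem_inter.mpr ⟨hyB, hyC⟩
    rw [hBCx] at this
    exact hyix.2 (mem_singleton.mp this)
  exact ⟨x, y, z, fun hh => hyC (hh ▸ hzC), hBeq, hCeq⟩

lemma welter_swap_lt (i q p : ℕ) (h : q < p) (hne : ¬(q = i ∧ p = i + 1)) :
    Equiv.swap i (i + 1) q < Equiv.swap i (i + 1) p := by
  simp only [Equiv.swap_apply_def]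
  split_ifs <;> omega

lemma welter_vertex_image (v i : ℕ) (hiv : i + 1 < v) (s : Finset ℕ)
    (hs : s ∈ welterVertex v 3) :
    s.image (Equiv.swap i (i + 1)) ∈ welterVertex v 3 := by
  obtain ⟨hsub, hcard⟩ := hs
  constructor
  · intro x hx
    obtain ⟨y, hy, rfl⟩ := mem_image.mp hx
    have hyv := mem_range.mp (hsub hy)
    rw [mem_range]
    rcases eq_or_ne y i with rfl | hy1
    · rw [Equiv.swap_apply_left]; exact hiv
    rcases eq_or_ne y (i + 1) with rfl | hy2
    · rw [Equiv.swap_apply_right]; omega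
    · rw [Equiv.swap_apply_of_ne_of_ne hy1 hy2]; exact hyv
  · rw [card_image_of_injective _ (Equiv.swap i (i + 1)).injective, hcard]

/-- If `B, C` are not in the special position, then the swap `(i, i+1)` maps common
in-neighbours of `(B, C)` to common in-neighbours of the swapped pair. -/
lemma welter_step (v i : ℕ) (hiv : i + 1 < v) (B C P : Finset ℕ)
    (hBC : (B ∩ C).card ≤ 1) (hGood : ¬ WGood B C i)
    (hPB : welterRel v 3 P B) (hPC : welterRel v 3 P C) :
    welterRel v 3 (P.image (Equiv.swap i (i + 1))) (B.image (Equiv.swap i (i + 1))) ∧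
    welterRel v 3 (P.image (Equiv.swap i (i + 1))) (C.image (Equiv.swap i (i + 1))) := by
  obtain ⟨hPv, hBv, hePB⟩ := hPB
  obtain ⟨-, hCv, hePC⟩ := hPC
  obtain ⟨p, q, h1, h2, hlt⟩ := (welterEdge_iff P B).mp hePB
  obtain ⟨p', q', h3, h4, hlt'⟩ := (welterEdge_iff P C).mp hePC
  have case1 : ¬(q = i ∧ p = i + 1) := by
    rintro ⟨hqi, hpi⟩
    rw [hpi] at h1
    rw [hqi] at h2
    obtain ⟨x, y, z, hyz, hBe, hCe⟩ :=
      welter_key B C P hBv.2 hCv.2 hPv.2 hBC i p' q' h1 h2 h3 h4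
    exact hGood ⟨x, y, z, hyz, Or.inl ⟨hBe, hCe⟩⟩
  have case2 : ¬(q' = i ∧ p' = i + 1) := by
    rintro ⟨hqi, hpi⟩
    rw [hpi] at h3
    rw [hqi] at h4
    obtain ⟨x, y, z, hyz, hCe, hBe⟩ :=
      welter_key C B P hCv.2 hBv.2 hPv.2 (by rwa [inter_comm]) i p q h3 h4 h1 h2
    exact hGood ⟨x, y, z, hyz, Or.inr ⟨hBe, hCe⟩⟩
  have hinj := (Equiv.swap i (i + 1)).injective
  refine ⟨⟨welter_vertex_image v i hiv P hPv, welter_vertex_image v i hiv B hBv, ?_⟩,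
    ⟨welter_vertex_image v i hiv P hPv, welter_vertex_image v i hiv C hCv, ?_⟩⟩
  · rw [welterEdge_iff]
    refine ⟨Equiv.swap i (i + 1) p, Equiv.swap i (i + 1) q, ?_, ?_,
      welter_swap_lt i q p hlt case1⟩
    · rw [← image_sdiff _ _ hinj, h1, image_singleton]
    · rw [← image_sdiff _ _ hinj, h2, image_singleton]
  · rw [welterEdge_iff]
    refine ⟨Equiv.swap i (i + 1) p', Equiv.swap i (i + 1) q', ?_, ?_,
      welter_swap_lt i q' p' hlt' case2⟩
    · rw [← image_sdiff _ _ hinj, h3, image_singleton]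
    · rw [← image_sdiff _ _ hinj, h4, image_singleton]

/-- For distinct blocks `B, C` of an `S(2, 3, v)` and the transposition `(i, i+1)` of
`{0, ..., v-1}`: if `I(B, C) ≠ I(B^{(i i+1)}, C^{(i i+1)})`, then
`{B, C} = {{i, x, y}, {i+1, x, z}}` for some `x, y, z` with `y ≠ z`. -/
theorem stmt_14 (v : ℕ) (𝔅 : Finset (Finset ℕ)) (h : IsSteiner v 2 3 𝔅)
    (B C : Finset ℕ) (hB : B ∈ 𝔅) (hC : C ∈ 𝔅) (hne : B ≠ C)
    (i : ℕ) (hiv : i + 1 < v)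
    (hI : ICount v B C
      ≠ ICount v (B.image (Equiv.swap i (i + 1))) (C.image (Equiv.swap i (i + 1)))) :
    ∃ x y z : ℕ, y ≠ z ∧
      ((B = {i, x, y} ∧ C = {i + 1, x, z}) ∨ (B = {i + 1, x, z} ∧ C = {i, x, y})) := by
  set τ := Equiv.swap i (i + 1) with hτ
  have hinj : Function.Injective (τ : ℕ → ℕ) := τ.injective
  obtain ⟨hBr, hB3⟩ := h.1 B hB
  obtain ⟨hCr, hC3⟩ := h.1 C hC
  -- distinct blocks of a Steiner system meet in at most one point
  have hBC : (B ∩ C).card ≤ 1 := by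
    by_contra hgt
    push_neg at hgt
    obtain ⟨a, ha, b, hb, hab⟩ := one_lt_card.mp hgt
    have haB := (mem_inter.mp ha).1
    have haC := (mem_inter.mp ha).2
    have hbB := (mem_inter.mp hb).1
    have hbC := (mem_inter.mp hb).2
    have hTsub : ({a, b} : Finset ℕ) ⊆ Finset.range v := by
      intro x hx
      rcases mem_insert.mp hx with rfl | hx
      · exact hBr haB
      · rw [mem_singleton.mp hx]; exact hBr hbB
    have hT := h.2 {a, b} hTsub (card_pair hab)
    have hsub : ({B, C} : Finset (Finset ℕ)) ⊆ 𝔅.filter fun b' => {a, b} ⊆ b' := by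
      intro X hX
      rcases mem_insert.mp hX with rfl | hX
      · refine mem_filter.mpr ⟨hB, ?_⟩
        intro x hx
        rcases mem_insert.mp hx with rfl | hx
        · exact haB
        · rw [mem_singleton.mp hx]; exact hbB
      · rw [mem_singleton.mp hX]
        refine mem_filter.mpr ⟨hC, ?_⟩
        intro x hx
        rcases mem_insert.mp hx with rfl | hx
        · exact haC
        · rw [mem_singleton.mp hx]; exact hbC
    have hc := card_le_card hsub
    rw [hT, card_pair hne] at hc
    omega
  by_contra hGoal
  have hGood : ¬ WGood B C i := hGoal
  -- τ is an involution on finsets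
  have hττ : ∀ s : Finset ℕ, (s.image τ).image τ = s := by
    intro s
    rw [image_image]
    have : (τ : ℕ → ℕ) ∘ τ = id := by
      funext a
      simp [hτ, Equiv.swap_apply_self]
    rw [this, image_id]
  -- the swapped pair is not in special position either
  have hGood' : ¬ WGood (B.image τ) (C.image τ) i := by
    rintro ⟨x, y, z, hyz, hcase⟩
    apply hGood
    have himg : ∀ a b c : ℕ, ({a, b, c} : Finset ℕ).image τ = {τ a, τ b, τ c} := by
      intro a b c
      simp [image_insert, image_singleton]
    have hτi : τ i = i + 1 := Equiv.swap_apply_left i (i + 1)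
    have hτi1 : τ (i + 1) = i := Equiv.swap_apply_right i (i + 1)
    have hτyz : τ z ≠ τ y := fun hh => hyz (hinj hh).symm
    rcases hcase with ⟨hBe, hCe⟩ | ⟨hBe, hCe⟩
    · refine ⟨τ x, τ z, τ y, hτyz, Or.inr ⟨?_, ?_⟩⟩
      · rw [← hττ B, hBe, himg, hτi]
      · rw [← hττ C, hCe, himg, hτi1]
    · refine ⟨τ x, τ z, τ y, hτyz, Or.inl ⟨?_, ?_⟩⟩
      · rw [← hττ B, hBe, himg, hτi1]
      · rw [← hττ C, hCe, himg, hτi]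
  -- the two common-in-neighbour sets are in bijection via τ
  have hBC' : ((B.image τ) ∩ (C.image τ)).card ≤ 1 := by
    rw [← image_inter _ _ hinj, card_image_of_injective _ hinj]
    exact hBC
  have hset : {P | welterRel v 3 P (B.image τ) ∧ welterRel v 3 P (C.image τ)} =
      (fun P : Finset ℕ => P.image τ) '' {P | welterRel v 3 P B ∧ welterRel v 3 P C} := by
    ext Q
    constructor
    · rintro ⟨hQB, hQC⟩
      refine ⟨Q.image τ, ?_, hττ Q⟩
      have hs := welter_step v i hiv (B.image τ) (C.image τ) Q hBC' hGood' hQB hQC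
      rw [hττ B, hττ C] at hs
      exact hs
    · rintro ⟨Q', ⟨hQ'B, hQ'C⟩, rfl⟩
      exact welter_step v i hiv B C Q' hBC hGood hQ'B hQ'C
  apply hI
  have hminj : Function.Injective fun P : Finset ℕ => P.image τ :=
    Finset.image_injective hinj
  rw [ICount, ICount, hset, Set.ncard_image_of_injective _ hminj]
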